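/- Let G be a connected graph and H a special connected induced subgraph of G. Define f : V(G) → V(H) by f(w) = w for w ∈ V(H), and f(u) = the unique gate vertex of u in H otherwise. Then f is a graph homomorphism from G (with loops allowed, i.e., f maps adjacent vertices to vertices that are adjacent or equal) onto H, and f restricted to V(H) is the identity; i.e., H is a retract of the reflexive closure of G. -/

import Mathlib

open SimpleGraph

/-- Let `H` (with vertex set `S`) be a special connected induced subgraph of a connected
graph `G`. Define `f` to be the identity on `S` and to send each `u ∉ S` to its gate
vertex in `S`. Then `f` maps into `S`, is the identity on `S`, and maps adjacent
vertices of `G` to equal or adjacent vertices: `H` is a retract of the reflexive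
closure of `G`. -/
theorem special_subgraph_retract {V : Type*} [Fintype V] (G : SimpleGraph V)
    (hG : G.Connected) (S : Set V) (hS : (G.induce S).Connected)
    (hspec : ∀ a b : V, a ∈ S → b ∈ S → a ≠ b →
      ∀ (p : G.Walk a b), p.IsPath → ∀ x ∈ p.support, x ∈ S)
    (f : V → V)
    (hf_id : ∀ w ∈ S, f w = w)
    (hf_gate : ∀ u, u ∉ S → f u ∈ S ∧
      ∀ w ∈ S, ∀ (p : G.Walk u w), p.IsPath → f u ∈ p.support) :
    (∀ a : V, f a ∈ S) ∧
    (∀ a b : V, G.Adj a b → f a = f b ∨ G.Adj (f a) (f b)) := by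
  classical
  have gate_mem : ∀ u, u ∉ S → f u ∈ S := fun u h => (hf_gate u h).1
  have mem : ∀ a : V, f a ∈ S := by
    intro a
    by_cases h : a ∈ S
    · rw [hf_id a h]; exact h
    · exact gate_mem a h
  refine ⟨mem, ?_⟩
  -- key: if u ∉ S and p is a path from u to f u, the only vertex of S on p is f u
  have key : ∀ u, u ∉ S → ∀ (p : G.Walk u (f u)), p.IsPath →
      ∀ x ∈ p.support, x ∈ S → x = f u := by
    intro u hu p hp x hx hxS
    by_contra hxne
    have h1 : (p.takeUntil x hx).IsPath := hp.takeUntil hx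
    have h2 : f u ∈ (p.takeUntil x hx).support := (hf_gate u hu).2 x hxS _ h1
    have h3 : f u ∈ (p.dropUntil x hx).support.tail := by
      have hmem : f u ∈ (p.dropUntil x hx).support := Walk.end_mem_support _
      rw [Walk.mem_support_iff] at hmem
      rcases hmem with h | h
      · exact absurd h.symm hxne
      · exact h
    have hnd : p.support.Nodup := hp.support_nodup
    rw [← Walk.take_spec p hx, Walk.support_append, List.nodup_append] at hnd
    exact hnd.2.2 _ h2 _ h3 rfl
  intro a b hab
  by_cases ha : a ∈ S <;> by_cases hb : b ∈ S
  · right; rw [hf_id a ha, hf_id b hb]; exact hab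
  · -- a ∈ S, b ∉ S
    left
    have hq : (Walk.cons hab.symm Walk.nil : G.Walk b a).IsPath := by
      refine Walk.IsPath.nil.cons ?_
      simp [hab.ne']
    have hfb := (hf_gate b hb).2 a ha _ hq
    simp only [Walk.support_cons, Walk.support_nil, List.mem_cons, List.mem_singleton] at hfb
    rcases hfb with h | h | h
    · exact absurd (h ▸ gate_mem b hb) hb
    · rw [hf_id a ha, h]
    · simp at h
  · -- a ∉ S, b ∈ S
    left
    have hq : (Walk.cons hab Walk.nil : G.Walk a b).IsPath := by
      refine Walk.IsPath.nil.cons ?_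
      simp [hab.ne]
    have hfa := (hf_gate a ha).2 b hb _ hq
    simp only [Walk.support_cons, Walk.support_nil, List.mem_cons, List.mem_singleton] at hfa
    rcases hfa with h | h | h
    · exact absurd (h ▸ gate_mem a ha) ha
    · rw [hf_id b hb, h]
    · simp at h
  · -- a ∉ S, b ∉ S : show f a = f b
    left
    obtain ⟨w⟩ := hG.preconnected a (f a)
    set p : G.Walk a (f a) := (w.toPath : G.Path a (f a)).1 with hpdef
    have hp : p.IsPath := w.toPath.2
    by_cases hbp : b ∈ p.support
    · have hd : (p.dropUntil b hbp).IsPath := hp.dropUntil hbp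
      have hfb := (hf_gate b hb).2 (f a) (gate_mem a ha) _ hd
      have hmem : f b ∈ p.support := Walk.support_dropUntil_subset _ _ hfb
      exact (key a ha p hp (f b) hmem (gate_mem b hb)).symm
    · have hq : (Walk.cons hab.symm p).IsPath := hp.cons hbp
      have hfb := (hf_gate b hb).2 (f a) (gate_mem a ha) _ hq
      rw [Walk.support_cons, List.mem_cons] at hfb
      rcases hfb with h | h
      · exact absurd (h ▸ gate_mem b hb) hb
      · exact (key a ha p hp (f b) h (gate_mem b hb)).symm
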